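/- arXiv:1801.08453 — 2 statements merged into one kernel-verified Lean document; each statement's English description precedes it below -/
import Mathlib

section
/- Let μ be a finite Borel measure on a measurable space, let 1 < p < 2 and set p' = p/(p−1). Let 0 < ε ≤ 1/2, let {S_i}_{i∈I} be a countable family of pairwise disjoint measurable sets with μ(S_i) > 0, and for each i let I_i ⊂ S_i be measurable with μ(I_i) > 0 and μ(S_i ∖ I_i) ≤ ε μ(S_i). Then for every g ∈ L²(μ): Σ_{i∈I} |⟨g⟩_{S_i} − ⟨g⟩_{I_i}|² μ(S_i) ≤ C(p) ε^{2/p'} ∫ |g|² dμ, where ⟨g⟩_E = μ(E)^{-1} ∫_E g dμ and C(p) depends only on p. -/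
open MeasureTheory
open scoped ENNReal

lemma cs_aux {X : Type} [MeasurableSpace X] (ν : Measure X) [IsFiniteMeasure ν]
    {f : X → ℝ} (hf : MemLp f 2 ν) :
    (∫ x, f x ∂ν) ^ 2 ≤ (ν Set.univ).toReal * ∫ x, f x ^ 2 ∂ν := by
  have hconj : Real.HolderConjugate 2 2 := Real.HolderConjugate.two_two
  have hf' : MemLp f (ENNReal.ofReal 2) ν := by
    simpa [ENNReal.ofReal_ofNat] using hf
  have h1' : MemLp (fun _ : X => (1 : ℝ)) (ENNReal.ofReal 2) ν := memLp_const 1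
  have key := integral_mul_norm_le_Lp_mul_Lq (μ := ν) hconj hf' h1'
  simp only [norm_one, mul_one] at key
  have hnorm : ∀ x, ‖f x‖ ^ (2 : ℝ) = f x ^ 2 := fun x => by
    rw [show ((2:ℝ)) = ((2:ℕ):ℝ) by norm_num, Real.rpow_natCast]
    simp [sq_abs, Real.norm_eq_abs]
  simp only [hnorm] at key
  rw [integral_const] at key
  simp only [smul_eq_mul, mul_one, Real.one_rpow] at key
  have habs : |∫ x, f x ∂ν| ≤ ∫ x, ‖f x‖ ∂ν := by
    simpa [Real.norm_eq_abs] using norm_integral_le_integral_norm (μ := ν) f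
  have hA : (0:ℝ) ≤ ∫ x, f x ^ 2 ∂ν := integral_nonneg fun x => sq_nonneg _
  have hB : (0:ℝ) ≤ (ν Set.univ).toReal := ENNReal.toReal_nonneg
  have h2 : |∫ x, f x ∂ν| ≤ (∫ x, f x ^ 2 ∂ν) ^ ((1:ℝ)/2) * (ν Set.univ).toReal ^ ((1:ℝ)/2) :=
    le_trans habs key
  have h3 := pow_le_pow_left₀ (abs_nonneg _) h2 2
  calc (∫ x, f x ∂ν) ^ 2 = |∫ x, f x ∂ν| ^ 2 := (sq_abs _).symm
    _ ≤ ((∫ x, f x ^ 2 ∂ν) ^ ((1:ℝ)/2) * (ν Set.univ).toReal ^ ((1:ℝ)/2)) ^ 2 := h3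
    _ = (ν Set.univ).toReal * ∫ x, f x ^ 2 ∂ν := by
        rw [mul_pow, ← Real.rpow_natCast ((∫ x, f x ^ 2 ∂ν) ^ ((1:ℝ)/2)) 2,
          ← Real.rpow_natCast ((ν Set.univ).toReal ^ ((1:ℝ)/2)) 2,
          ← Real.rpow_mul hA, ← Real.rpow_mul hB]
        norm_num [mul_comm]

set_option maxHeartbeats 1000000 in
lemma key_real {X : Type} [MeasurableSpace X] (μ : Measure X) [IsFiniteMeasure μ]
    {S I : Set X} (hS : MeasurableSet S) (hI : MeasurableSet I) (hIS : I ⊆ S)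
    (hSpos : 0 < μ S) (hIpos : 0 < μ I) {ε : ℝ} (hε : 0 < ε) (hε2 : ε ≤ 1 / 2)
    (hdiff : μ (S \ I) ≤ ENNReal.ofReal ε * μ S) {g : X → ℝ} (hg : MemLp g 2 μ) :
    ((⨍ x in S, g x ∂μ) - ⨍ x in I, g x ∂μ) ^ 2 * (μ S).toReal
      ≤ 6 * ε * ∫ x in S, g x ^ 2 ∂μ := by
  set c := ⨍ x in I, g x ∂μ with hc
  set mS := (μ S).toReal with hmSdef
  set mI := (μ I).toReal with hmIdef
  set mD := (μ (S \ I)).toReal with hmDdef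
  set D := ∫ x in S \ I, (g x - c) ∂μ with hDdef
  set J1 := ∫ x in S \ I, (g x - c) ^ 2 ∂μ with hJ1
  set J2 := ∫ x in S, (g x - c) ^ 2 ∂μ with hJ2
  set K := ∫ x in S, g x ^ 2 ∂μ with hK
  set KI := ∫ x in I, g x ^ 2 ∂μ with hKI
  clear_value c mS mI mD D J1 J2 K KI
  have hmS : 0 < mS := hmSdef ▸ ENNReal.toReal_pos hSpos.ne' (measure_ne_top μ S)
  have hmI : 0 < mI := hmIdef ▸ ENNReal.toReal_pos hIpos.ne' (measure_ne_top μ I)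
  have hmD0 : 0 ≤ mD := hmDdef ▸ ENNReal.toReal_nonneg
  have hsum : mI + mD = mS := by
    rw [hmIdef, hmDdef, hmSdef, ← ENNReal.toReal_add (measure_ne_top μ I) (measure_ne_top μ _)]
    congr 1
    rw [measure_add_diff hI.nullMeasurableSet S, Set.union_eq_self_of_subset_left hIS]
  have hmD : mD ≤ ε * mS := by
    have h := ENNReal.toReal_mono
      (ENNReal.mul_ne_top ENNReal.ofReal_ne_top (measure_ne_top μ S)) hdiff
    rw [ENNReal.toReal_mul, ENNReal.toReal_ofReal hε.le] at h
    rw [hmDdef, hmSdef]; exact h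
  have hgi : Integrable g μ := hg.integrable one_le_two
  have hg2i : Integrable (fun x => g x ^ 2) μ := hg.integrable_sq
  have hgc : MemLp (fun x => g x - c) 2 μ := hg.sub (memLp_const c)
  have hgc2i : Integrable (fun x => (g x - c) ^ 2) μ := hgc.integrable_sq
  have hcI : ∫ x in I, g x ∂μ = c * mI := by
    rw [hc, setAverage_eq, smul_eq_mul, measureReal_def, ← hmIdef, inv_mul_eq_div, div_mul_cancel₀ _ hmI.ne']
  have hD : D = (∫ x in S, g x ∂μ) - (∫ x in I, g x ∂μ) - c * mD := by
    rw [hDdef, integral_sub hgi.integrableOn (integrableOn_const (measure_ne_top μ _)),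
      integral_diff hI hgi.integrableOn hIS, setIntegral_const, smul_eq_mul, mul_comm, measureReal_def, ← hmDdef]
  have hAc : (⨍ x in S, g x ∂μ) - c = mS⁻¹ * D := by
    have h1 : (∫ x in S, g x ∂μ) - c * mI - c * mD = (∫ x in S, g x ∂μ) - c * mS := by
      rw [← hsum]; ring
    rw [setAverage_eq, smul_eq_mul, hD, hcI, measureReal_def, ← hmSdef, h1, mul_sub, mul_comm c mS,
      ← mul_assoc, inv_mul_cancel₀ hmS.ne', one_mul]
  have hCS1 : D ^ 2 ≤ mD * J1 := by
    have h := cs_aux (μ.restrict (S \ I)) (hgc.restrict (s := S \ I))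
    rw [Measure.restrict_apply_univ] at h
    rw [hDdef, hJ1, hmDdef]
    exact h
  have hJ10 : 0 ≤ J1 := hJ1 ▸ integral_nonneg fun x => sq_nonneg _
  have hK0 : 0 ≤ K := hK ▸ integral_nonneg fun x => sq_nonneg _
  have hKI0 : 0 ≤ KI := hKI ▸ integral_nonneg fun x => sq_nonneg _
  have hmono1 : J1 ≤ J2 := by
    rw [hJ1, hJ2]
    exact setIntegral_mono_set hgc2i.integrableOn
      (Filter.Eventually.of_forall fun x => sq_nonneg _)
      (HasSubset.Subset.eventuallyLE Set.diff_subset)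
  have h4 : J2 ≤ 2 * K + 2 * c ^ 2 * mS := by
    have hle : J2 ≤ ∫ x in S, (2 * g x ^ 2 + 2 * c ^ 2) ∂μ := by
      rw [hJ2]
      refine setIntegral_mono hgc2i.integrableOn ?_ fun x => by nlinarith [sq_nonneg (g x + c)]
      exact ((hg2i.const_mul 2).add (integrable_const _)).integrableOn
    have heq : ∫ x in S, (2 * g x ^ 2 + 2 * c ^ 2) ∂μ = 2 * K + 2 * c ^ 2 * mS := by
      rw [integral_add ((hg2i.const_mul 2).integrableOn)
          (integrableOn_const (measure_ne_top μ _)),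
        integral_const_mul, setIntegral_const, smul_eq_mul, measureReal_def, ← hmSdef, ← hK]
      ring
    linarith
  have hCS2 : (c * mI) ^ 2 ≤ mI * KI := by
    have h := cs_aux (μ.restrict I) (hg.restrict (s := I))
    rw [Measure.restrict_apply_univ] at h
    rw [← hcI, hmIdef, hKI]
    exact h
  have hmS2I : mS ≤ 2 * mI := by
    nlinarith [mul_le_mul_of_nonneg_right hε2 hmS.le]
  have hc2 : c ^ 2 * mS ≤ 2 * KI := by
    rw [mul_pow] at hCS2
    have h1 : c ^ 2 * mI ≤ KI := by
      have h2 : mI * (c ^ 2 * mI) ≤ mI * KI := by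
        calc mI * (c ^ 2 * mI) = c ^ 2 * mI ^ 2 := by ring
          _ ≤ mI * KI := hCS2
      exact le_of_mul_le_mul_left h2 hmI
    calc c ^ 2 * mS ≤ c ^ 2 * (2 * mI) :=
          mul_le_mul_of_nonneg_left hmS2I (sq_nonneg c)
      _ = 2 * (c ^ 2 * mI) := by ring
      _ ≤ 2 * KI := by linarith
  have hmono2 : KI ≤ K := by
    rw [hKI, hK]
    exact setIntegral_mono_set hg2i.integrableOn
      (Filter.Eventually.of_forall fun x => sq_nonneg _)
      (HasSubset.Subset.eventuallyLE hIS)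
  have hJ16 : J1 ≤ 6 * K := by linarith
  have e2 : D ^ 2 / mS ≤ ε * J1 := by
    rw [div_le_iff₀ hmS]
    nlinarith [mul_le_mul_of_nonneg_right hmD hJ10]
  calc ((⨍ x in S, g x ∂μ) - c) ^ 2 * mS = D ^ 2 / mS := by
        rw [hAc]
        field_simp
    _ ≤ ε * J1 := e2
    _ ≤ ε * (6 * K) := mul_le_mul_of_nonneg_left hJ16 hε.le
    _ = 6 * ε * K := by ring

/-- Comparison between averages over sets `S i` and over large subsets `I i ⊆ S i`:
if `μ(S i \ I i) ≤ ε μ(S i)` for a pairwise disjoint family `{S i}`, then for `g ∈ L²(μ)`,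
`Σ_i |⟨g⟩_{S i} − ⟨g⟩_{I i}|² μ(S i) ≤ C(p) ε^{2/p'} ∫ |g|² dμ`, where `p' = p/(p−1)`. -/
theorem average_comparison_estimate (p : ℝ) (hp1 : 1 < p) (hp2 : p < 2) :
    ∃ C : ℝ, 0 < C ∧
      ∀ (X : Type) (_ : MeasurableSpace X) (μ : Measure X), IsFiniteMeasure μ →
      ∀ ε : ℝ, 0 < ε → ε ≤ 1 / 2 →
      ∀ (ι : Type) (_ : Countable ι) (S : ι → Set X) (In : ι → Set X),
        (∀ i, MeasurableSet (S i)) → Pairwise (Function.onFun Disjoint S) →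
        (∀ i, 0 < μ (S i)) →
        (∀ i, MeasurableSet (In i)) → (∀ i, In i ⊆ S i) → (∀ i, 0 < μ (In i)) →
        (∀ i, μ (S i \ In i) ≤ ENNReal.ofReal ε * μ (S i)) →
        ∀ g : X → ℝ, MemLp g 2 μ →
          ∑' i, ENNReal.ofReal (((⨍ x in S i, g x ∂μ) - ⨍ x in In i, g x ∂μ) ^ 2) * μ (S i)
            ≤ ENNReal.ofReal (C * ε ^ (2 / (p / (p - 1)))) *
              ∫⁻ x, ENNReal.ofReal (g x ^ 2) ∂μ := by
  refine ⟨6, by norm_num, ?_⟩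
  intro X mX μ hfin ε hε hε2 ι hcount S In hSm hdisj hSpos hInm hInS hInpos hdiff g hg
  haveI := hfin
  haveI := hcount
  set α := 2 / (p / (p - 1)) with hα
  have hp0 : (0:ℝ) < p := lt_trans one_pos hp1
  have hp1' : (0:ℝ) < p - 1 := by linarith
  have hαeq : α = 2 * (p - 1) / p := by rw [hα, div_div_eq_mul_div]
  have hα1 : α ≤ 1 := by
    rw [hαeq, div_le_one hp0]; linarith
  have hεα : ε ≤ ε ^ α := by
    have h := Real.rpow_le_rpow_of_exponent_ge hε (le_trans hε2 (by norm_num)) hα1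
    rwa [Real.rpow_one] at h
  have h6 : ENNReal.ofReal (6 * ε) ≤ ENNReal.ofReal (6 * ε ^ α) :=
    ENNReal.ofReal_le_ofReal (by linarith)
  -- per-index estimate
  have hper : ∀ i,
      ENNReal.ofReal (((⨍ x in S i, g x ∂μ) - ⨍ x in In i, g x ∂μ) ^ 2) * μ (S i)
        ≤ ENNReal.ofReal (6 * ε) * ∫⁻ x in S i, ENNReal.ofReal (g x ^ 2) ∂μ := by
    intro i
    have hkey := key_real μ (hSm i) (hInm i) (hInS i) (hSpos i) (hInpos i) hε hε2 (hdiff i) hg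
    have h1 : ENNReal.ofReal (((⨍ x in S i, g x ∂μ) - ⨍ x in In i, g x ∂μ) ^ 2) * μ (S i)
        = ENNReal.ofReal ((((⨍ x in S i, g x ∂μ) - ⨍ x in In i, g x ∂μ) ^ 2) * (μ (S i)).toReal) := by
      rw [ENNReal.ofReal_mul (sq_nonneg _), ENNReal.ofReal_toReal (measure_ne_top μ _)]
    have h2 : ENNReal.ofReal (6 * ε * ∫ x in S i, g x ^ 2 ∂μ)
        = ENNReal.ofReal (6 * ε) * ∫⁻ x in S i, ENNReal.ofReal (g x ^ 2) ∂μ := by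
      rw [ENNReal.ofReal_mul (by positivity),
        ofReal_integral_eq_lintegral_ofReal hg.integrable_sq.integrableOn
          (Filter.Eventually.of_forall fun x => sq_nonneg _)]
    rw [h1, ← h2]
    exact ENNReal.ofReal_le_ofReal hkey
  calc ∑' i, ENNReal.ofReal (((⨍ x in S i, g x ∂μ) - ⨍ x in In i, g x ∂μ) ^ 2) * μ (S i)
      ≤ ∑' i, ENNReal.ofReal (6 * ε) * ∫⁻ x in S i, ENNReal.ofReal (g x ^ 2) ∂μ :=
        ENNReal.tsum_le_tsum hper
    _ = ENNReal.ofReal (6 * ε) * ∑' i, ∫⁻ x in S i, ENNReal.ofReal (g x ^ 2) ∂μ :=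
        ENNReal.tsum_mul_left
    _ = ENNReal.ofReal (6 * ε) * ∫⁻ x in ⋃ i, S i, ENNReal.ofReal (g x ^ 2) ∂μ := by
        rw [lintegral_iUnion hSm hdisj]
    _ ≤ ENNReal.ofReal (6 * ε) * ∫⁻ x, ENNReal.ofReal (g x ^ 2) ∂μ :=
        mul_le_mul_right (setLIntegral_le_lintegral _ _) _
    _ ≤ ENNReal.ofReal (6 * ε ^ α) * ∫⁻ x, ENNReal.ofReal (g x ^ 2) ∂μ :=
        mul_le_mul_left h6 _
end

section
/- Let n ≥ 1, γ > 0, c₀ > 0, and let η be a finite Borel measure on ℝ^{n+1} with n-polynomial growth with constant c₀. Let {S_i}_{i∈I} be a countable family of pairwise disjoint Borel subsets of ℝ^{n+1}, and let ℓ_i > 0 satisfy diam(S_i) ≤ ℓ_i for each i. Set D(i,j) = ℓ_i + ℓ_j + dist(S_i, S_j) and define g(x) = Σ_{i∈I} ( Σ_{j∈I, j≠i} ℓ_j^{γ} η(S_j) D(i,j)^{−n−γ} ) χ_{S_i}(x). Then ‖g‖_{L²(η)} ≤ C(n,γ) c₀ η(⋃_{i∈I} S_i)^{1/2}, where C(n,γ)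 depends only on n and γ. -/
open scoped Classical

open MeasureTheory Metric
open scoped ENNReal

open Set

set_option linter.unusedSectionVars false
set_option linter.unusedVariables false
set_option maxHeartbeats 1000000

noncomputable section

variable {α : Type*} [MetricSpace α] [MeasurableSpace α] [BorelSpace α]
  [SecondCountableTopology α]

/-- Growth-normalized centered maximal function of a measure `ν`, with normalization
`c₀ r^n`, defined as a sup over rational radii. -/
def maxB (c₀ : ℝ) (n : ℕ) (ν : Measure α) (y : α) : ℝ≥0∞ :=
  ⨆ (q : ℚ) (_ : 0 < q), ν (ball y (q : ℝ)) / ENNReal.ofReal (c₀ * (q : ℝ) ^ n)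

lemma measure_ball_eq_iSup (ν : Measure α) (y : α) {r : ℝ} (hr : 0 < r) :
    ν (ball y r) = ⨆ q : {q : ℚ // 0 < q ∧ (q : ℝ) < r}, ν (ball y (q : ℝ)) := by
  have hU : ball y r = ⋃ q : {q : ℚ // 0 < q ∧ (q : ℝ) < r}, ball y (q : ℝ) := by
    ext z
    simp only [mem_ball, mem_iUnion]
    constructor
    · intro h
      obtain ⟨q, hq1, hq2⟩ := exists_rat_btwn (max_lt h hr : max (dist z y) 0 < r)
      have hq0 : (0 : ℚ) < q := by exact_mod_cast (le_max_right _ _).trans_lt hq1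
      exact ⟨⟨q, hq0, hq2⟩, (le_max_left _ _).trans_lt hq1⟩
    · rintro ⟨q, hq⟩
      exact hq.trans q.2.2
  rw [hU]
  apply Directed.measure_iUnion
  rintro ⟨q1, h1⟩ ⟨q2, h2⟩
  refine ⟨⟨max q1 q2, lt_max_of_lt_left h1.1, by push_cast; exact max_lt h1.2 h2.2⟩, ?_, ?_⟩
  · exact ball_subset_ball (by push_cast; exact le_max_left _ _)
  · exact ball_subset_ball (by push_cast; exact le_max_right _ _)

lemma measure_ball_le_maxB {c₀ : ℝ} (hc₀ : 0 < c₀) (n : ℕ) (ν : Measure α) (y : α)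
    {r : ℝ} (hr : 0 < r) :
    ν (ball y r) ≤ maxB c₀ n ν y * ENNReal.ofReal (c₀ * r ^ n) := by
  rw [measure_ball_eq_iSup ν y hr]
  apply iSup_le
  rintro ⟨q, hq0, hqr⟩
  have hq0' : (0:ℝ) < q := by exact_mod_cast hq0
  have hden : ENNReal.ofReal (c₀ * (q:ℝ) ^ n) ≠ 0 := by
    simp only [ne_eq, ENNReal.ofReal_eq_zero, not_le]
    positivity
  calc ν (ball y (q:ℝ))
      = ν (ball y (q:ℝ)) / ENNReal.ofReal (c₀ * (q:ℝ) ^ n) * ENNReal.ofReal (c₀ * (q:ℝ) ^ n) :=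
        (ENNReal.div_mul_cancel hden ENNReal.ofReal_ne_top).symm
    _ ≤ maxB c₀ n ν y * ENNReal.ofReal (c₀ * r ^ n) := by
        apply mul_le_mul'
        · exact le_iSup₂ (f := fun (q : ℚ) (_ : 0 < q) =>
            ν (ball y (q : ℝ)) / ENNReal.ofReal (c₀ * (q : ℝ) ^ n)) q hq0
        · apply ENNReal.ofReal_le_ofReal
          have : (q:ℝ) ^ n ≤ r ^ n := pow_le_pow_left₀ hq0'.le hqr.le n
          nlinarith

lemma lowerSemicontinuous_measure_ball (ν : Measure α) {r : ℝ} (hr : 0 < r) :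
    LowerSemicontinuous (fun y => ν (ball y r)) := by
  intro y c hc
  change c < ν (ball y r) at hc
  rw [measure_ball_eq_iSup ν y hr, lt_iSup_iff] at hc
  obtain ⟨⟨q, hq0, hqr⟩, hc⟩ := hc
  have hq0' : (0:ℝ) < q := by exact_mod_cast hq0
  have : Metric.ball y (r - q) ∈ nhds y := ball_mem_nhds _ (by linarith)
  filter_upwards [this] with y' hy'
  change c < ν (ball y' r)
  have hsub : ball y (q:ℝ) ⊆ ball y' r := by
    intro z hz
    rw [mem_ball] at hz hy' ⊢
    have h3 := dist_triangle z y y'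
    rw [dist_comm y y'] at h3
    linarith
  exact hc.trans_le (measure_mono hsub)

lemma measurable_maxB (c₀ : ℝ) (n : ℕ) (ν : Measure α) : Measurable (maxB c₀ n ν) := by
  apply Measurable.iSup
  intro q
  apply Measurable.iSup
  intro hq
  have hq' : (0:ℝ) < q := by exact_mod_cast hq
  exact ((lowerSemicontinuous_measure_ball ν hq').measurable).div measurable_const

lemma maxB_add_le (c₀ : ℝ) (n : ℕ) (ν₁ ν₂ : Measure α) (y : α) :
    maxB c₀ n (ν₁ + ν₂) y ≤ maxB c₀ n ν₁ y + maxB c₀ n ν₂ y := by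
  apply iSup₂_le
  intro q hq
  rw [Measure.add_apply, ENNReal.add_div]
  exact add_le_add
    (le_iSup₂ (f := fun (q : ℚ) (_ : 0 < q) =>
      ν₁ (ball y (q : ℝ)) / ENNReal.ofReal (c₀ * (q : ℝ) ^ n)) q hq)
    (le_iSup₂ (f := fun (q : ℚ) (_ : 0 < q) =>
      ν₂ (ball y (q : ℝ)) / ENNReal.ofReal (c₀ * (q : ℝ) ^ n)) q hq)

lemma maxB_mono {c₀ : ℝ} (n : ℕ) {ν ν' : Measure α} (h : ν ≤ ν') (y : α) :
    maxB c₀ n ν y ≤ maxB c₀ n ν' y := by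
  apply iSup₂_le
  intro q hq
  refine le_trans (ENNReal.div_le_div_right (h _) _)
    (le_iSup₂ (f := fun (q : ℚ) (_ : 0 < q) =>
      ν' (ball y (q : ℝ)) / ENNReal.ofReal (c₀ * (q : ℝ) ^ n)) q hq)

lemma maxB_withDensity_le_const {c₀ : ℝ} {n : ℕ} (η : Measure α)
    (hgrow : ∀ x r, 0 < r → η (ball x r) ≤ ENNReal.ofReal (c₀ * r ^ n))
    {f : α → ℝ≥0∞} {s : ℝ≥0∞} (hf : ∀ x, f x ≤ s) (y : α) :
    maxB c₀ n (η.withDensity f) y ≤ s := by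
  apply iSup₂_le
  intro q hq
  have hq' : (0:ℝ) < q := by exact_mod_cast hq
  rw [withDensity_apply _ measurableSet_ball]
  apply ENNReal.div_le_of_le_mul
  calc ∫⁻ x in ball y (q:ℝ), f x ∂η ≤ ∫⁻ _ in ball y (q:ℝ), s ∂η := lintegral_mono fun x => hf x
    _ = s * η (ball y (q:ℝ)) := by rw [setLIntegral_const]
    _ ≤ s * ENNReal.ofReal (c₀ * (q:ℝ) ^ n) := mul_le_mul_right (hgrow y _ hq') _


lemma maxB_weak (N : ℕ) {τ : ℝ} (hτ : 1 < τ) (hN : IsEmpty (Besicovitch.SatelliteConfig α N τ))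
    {c₀ : ℝ} (hc₀ : 0 < c₀) {n : ℕ} (hn : 1 ≤ n) (η ν : Measure α)
    (hgrow : ∀ x r, 0 < r → η (ball x r) ≤ ENNReal.ofReal (c₀ * r ^ n))
    {t : ℝ} (ht : 0 < t) :
    η {y | ENNReal.ofReal t < maxB c₀ n ν y} ≤
      (N + 1) * (ENNReal.ofReal t)⁻¹ * ν Set.univ := by
  have htne : ENNReal.ofReal t ≠ 0 := by simp [ht]
  rcases eq_or_ne (ν Set.univ) ∞ with htop | hfin
  · rw [htop]
    rw [ENNReal.mul_top]
    · exact le_top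
    · refine mul_ne_zero ?_ (ENNReal.inv_ne_zero.2 ENNReal.ofReal_ne_top)
      simp
  set E := {y | ENNReal.ofReal t < maxB c₀ n ν y} with hE
  -- for each center, choose a good radius
  have hch : ∀ y : E, ∃ q : ℚ, 0 < (q : ℝ) ∧
      ENNReal.ofReal t * ENNReal.ofReal (c₀ * (q : ℝ) ^ n) < ν (ball (y : α) (q : ℝ)) := by
    rintro ⟨y, hy⟩
    change ENNReal.ofReal t < maxB c₀ n ν y at hy
    rw [maxB, lt_iSup_iff] at hy
    obtain ⟨q, hy⟩ := hy
    rw [lt_iSup_iff] at hy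
    obtain ⟨hq, hy⟩ := hy
    have hq' : (0:ℝ) < q := by exact_mod_cast hq
    refine ⟨q, hq', ?_⟩
    have hD0 : ENNReal.ofReal (c₀ * (q:ℝ) ^ n) ≠ 0 := by
      simp only [ne_eq, ENNReal.ofReal_eq_zero, not_le]
      positivity
    exact (ENNReal.lt_div_iff_mul_lt (Or.inl hD0) (Or.inl ENNReal.ofReal_ne_top)).1 hy
  choose qf hq0 hqlt using hch
  -- radii are bounded
  set Q : ℝ := ((ν Set.univ).toReal / (t * c₀)) with hQ
  have hrle : ∀ y : E, (qf y : ℝ) ≤ max 1 Q := by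
    intro y
    have h1 : ENNReal.ofReal (t * (c₀ * (qf y : ℝ) ^ n)) < ν Set.univ := by
      rw [ENNReal.ofReal_mul ht.le]
      exact (hqlt y).trans_le (measure_mono (subset_univ _))
    have h2 : t * (c₀ * (qf y : ℝ) ^ n) < (ν Set.univ).toReal := by
      have hq' := hq0 y
      exact (ENNReal.ofReal_lt_iff_lt_toReal (by positivity) hfin).1 h1
    have hpow : (qf y : ℝ) ^ n < Q := by
      rw [hQ, lt_div_iff₀ (by positivity)]
      nlinarith
    rcases le_or_gt (qf y : ℝ) 1 with h | h
    · exact h.trans (le_max_left _ _)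
    · refine le_trans ?_ (le_max_right _ _)
      calc (qf y : ℝ) = (qf y : ℝ) ^ 1 := (pow_one _).symm
        _ ≤ (qf y : ℝ) ^ n := pow_le_pow_right₀ h.le hn
        _ ≤ Q := hpow.le
  -- Besicovitch covering
  set pkg : Besicovitch.BallPackage E α :=
    { c := Subtype.val
      r := fun y => (qf y : ℝ)
      rpos := hq0
      r_bound := max 1 Q
      r_le := hrle }
  obtain ⟨s, hs, hcov⟩ := Besicovitch.exist_disjoint_covering_families hτ hN pkg
  have hrange : Set.range pkg.c = E := Subtype.range_coe
  have hEsub : E ⊆ ⋃ i : Fin N, ⋃ j ∈ s i, ball (pkg.c j) (pkg.r j) := by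
    rwa [hrange] at hcov
  have hcnt : ∀ i, (s i).Countable := by
    intro i
    refine Set.PairwiseDisjoint.countable_of_isOpen
      ((hs i).mono fun j => ball_subset_closedBall) (fun j _ => isOpen_ball)
      (fun j _ => nonempty_ball.2 (hq0 j))
  calc η E ≤ η (⋃ i : Fin N, ⋃ j ∈ s i, ball (pkg.c j) (pkg.r j)) := measure_mono hEsub
    _ ≤ ∑ i : Fin N, η (⋃ j ∈ s i, ball (pkg.c j) (pkg.r j)) := measure_iUnion_fintype_le _ _
    _ ≤ ∑ i : Fin N, (ENNReal.ofReal t)⁻¹ * ν Set.univ := by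
        apply Finset.sum_le_sum
        intro i _
        calc η (⋃ j ∈ s i, ball (pkg.c j) (pkg.r j))
            ≤ ∑' j : s i, η (ball (pkg.c j) (pkg.r j)) := measure_biUnion_le _ (hcnt i) _
          _ ≤ ∑' j : s i, (ENNReal.ofReal t)⁻¹ * ν (ball (pkg.c j) (pkg.r j)) := by
              apply ENNReal.tsum_le_tsum
              intro j
              have h1 : η (ball (pkg.c j) (pkg.r j)) ≤
                  ENNReal.ofReal (c₀ * (pkg.r j) ^ n) := hgrow _ _ (hq0 j)
              have h2 : ENNReal.ofReal (c₀ * (pkg.r j) ^ n) ≤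
                  (ENNReal.ofReal t)⁻¹ * ν (ball (pkg.c j) (pkg.r j)) := by
                rw [← ENNReal.div_eq_inv_mul]
                rw [ENNReal.le_div_iff_mul_le (Or.inl htne) (Or.inl ENNReal.ofReal_ne_top)]
                rw [mul_comm]
                exact (hqlt j).le
              exact h1.trans h2
          _ = (ENNReal.ofReal t)⁻¹ * ∑' j : s i, ν (ball (pkg.c j) (pkg.r j)) :=
              ENNReal.tsum_mul_left
          _ ≤ (ENNReal.ofReal t)⁻¹ * ν Set.univ := by
              apply mul_le_mul_right
              rw [← measure_biUnion (hcnt i) ((hs i).mono fun j => ball_subset_closedBall)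
                (fun j _ => measurableSet_ball)]
              exact measure_mono (subset_univ _)
    _ ≤ (N + 1) * (ENNReal.ofReal t)⁻¹ * ν Set.univ := by
        rw [Finset.sum_const, Finset.card_univ, Fintype.card_fin, nsmul_eq_mul, mul_assoc]
        exact mul_le_mul_left (self_le_add_right _ _) _


lemma lintegral_Ioi_ofReal_rpow {a s : ℝ} (ha : 0 < a) (hs : s < -1) :
    ∫⁻ t in Ioi a, ENNReal.ofReal (t ^ s) = ENNReal.ofReal (a ^ (s + 1) / (-(s + 1))) := by
  rw [← ofReal_integral_eq_lintegral_ofReal (integrableOn_Ioi_rpow_of_lt hs ha)]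
  · rw [integral_Ioi_rpow_of_lt hs ha]
    rw [div_neg, neg_div]
  · filter_upwards [ae_restrict_mem measurableSet_Ioi] with x hx
    exact Real.rpow_nonneg (ha.trans hx).le _

lemma lintegral_eq_layercake {β : Type*} [MeasurableSpace β] (μ : Measure β) [SFinite μ]
    {h : β → ℝ≥0∞} (hm : Measurable h) :
    ∫⁻ x, h x ∂μ = ∫⁻ t in Ioi (0 : ℝ), μ {x | ENNReal.ofReal t < h x} := by
  have hsetm : ∀ t : ℝ, MeasurableSet {x | ENNReal.ofReal t < h x} := fun t =>
    measurableSet_lt measurable_const hm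
  have aux : ∀ x, (volume.restrict (Ioi (0:ℝ))) {t : ℝ | ENNReal.ofReal t < h x} = h x := by
    intro x
    rw [Measure.restrict_apply' measurableSet_Ioi]
    rcases eq_or_ne (h x) ⊤ with htop | hfin
    · have : {t : ℝ | ENNReal.ofReal t < h x} ∩ Ioi 0 = Ioi (0:ℝ) := by
        apply inter_eq_right.2
        intro t _
        simp only [mem_setOf_eq, htop]
        exact ENNReal.ofReal_lt_top
      rw [this, htop, Real.volume_Ioi]
    · have : {t : ℝ | ENNReal.ofReal t < h x} ∩ Ioi 0 = Ioo (0:ℝ) ((h x).toReal) := by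
        ext t
        simp only [mem_inter_iff, mem_setOf_eq, mem_Ioi, mem_Ioo]
        constructor
        · rintro ⟨h1, h2⟩
          exact ⟨h2, (ENNReal.ofReal_lt_iff_lt_toReal h2.le hfin).1 h1⟩
        · rintro ⟨h1, h2⟩
          exact ⟨(ENNReal.ofReal_lt_iff_lt_toReal h1.le hfin).2 h2, h1⟩
      rw [this, Real.volume_Ioo, sub_zero, ENNReal.ofReal_toReal hfin]
  have hFm : Measurable (Function.uncurry fun (t : ℝ) (x : β) =>
      Set.indicator {p : ℝ × β | ENNReal.ofReal p.1 < h p.2} (1 : ℝ × β → ℝ≥0∞) (t, x)) := by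
    apply Measurable.indicator measurable_const
    exact measurableSet_lt (ENNReal.measurable_ofReal.comp measurable_fst)
      (hm.comp measurable_snd)
  calc ∫⁻ x, h x ∂μ
      = ∫⁻ x, ∫⁻ t in Ioi (0:ℝ), Set.indicator {p : ℝ × β | ENNReal.ofReal p.1 < h p.2}
          (1 : ℝ × β → ℝ≥0∞) (t, x) ∂volume ∂μ := by
        apply lintegral_congr
        intro x
        have heq : ∀ t : ℝ, Set.indicator {p : ℝ × β | ENNReal.ofReal p.1 < h p.2}
            (1 : ℝ × β → ℝ≥0∞) (t, x) = Set.indicator {t : ℝ | ENNReal.ofReal t < h x}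
            (1 : ℝ → ℝ≥0∞) t := by
          intro t
          by_cases hx : ENNReal.ofReal t < h x <;>
            simp [Set.indicator_apply, hx]
        simp only [heq]
        rw [lintegral_indicator_one (measurableSet_lt ENNReal.measurable_ofReal measurable_const)]
        exact (aux x).symm
    _ = ∫⁻ t in Ioi (0:ℝ), ∫⁻ x, Set.indicator {p : ℝ × β | ENNReal.ofReal p.1 < h p.2}
          (1 : ℝ × β → ℝ≥0∞) (t, x) ∂μ ∂volume := by
        exact (lintegral_lintegral_swap hFm.aemeasurable).symm
    _ = ∫⁻ t in Ioi (0:ℝ), μ {x | ENNReal.ofReal t < h x} := by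
        apply lintegral_congr
        intro t
        have heq : ∀ x : β, Set.indicator {p : ℝ × β | ENNReal.ofReal p.1 < h p.2}
            (1 : ℝ × β → ℝ≥0∞) (t, x) = Set.indicator {x : β | ENNReal.ofReal t < h x}
            (1 : β → ℝ≥0∞) x := by
          intro x
          by_cases hx : ENNReal.ofReal t < h x <;>
            simp [Set.indicator_apply, hx]
        simp only [heq]
        rw [lintegral_indicator_one (hsetm t)]

lemma setLIntegral_maxB_le (N : ℕ) {τ : ℝ} (hτ : 1 < τ)
    (hN : IsEmpty (Besicovitch.SatelliteConfig α N τ))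
    {c₀ : ℝ} (hc₀ : 0 < c₀) {n : ℕ} (hn : 1 ≤ n) (η : Measure α) [IsFiniteMeasure η]
    (hgrow : ∀ x r, 0 < r → η (ball x r) ≤ ENNReal.ofReal (c₀ * r ^ n))
    {f : α → ℝ≥0∞} (hf : Measurable f) {U : Set α} (hU : MeasurableSet U)
    {t₀ : ℝ} (ht₀ : 0 < t₀) :
    ∫⁻ y in U, maxB c₀ n (η.withDensity f) y ∂η ≤
      ENNReal.ofReal t₀ * η U +
        4 * (N + 1) * (ENNReal.ofReal t₀)⁻¹ * ∫⁻ x, f x ^ 2 ∂η := by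
  set T2 := ∫⁻ x, f x ^ 2 ∂η with hT2
  have hMm : Measurable (maxB c₀ n (η.withDensity f)) := measurable_maxB _ _ _
  have hsetm : ∀ t : ℝ, MeasurableSet {y | ENNReal.ofReal t < maxB c₀ n (η.withDensity f) y} :=
    fun t => measurableSet_lt measurable_const hMm
  rw [lintegral_eq_layercake (η.restrict U) hMm]
  have hsplit : Ioi (0:ℝ) = Ioc 0 t₀ ∪ Ioi t₀ := (Ioc_union_Ioi_eq_Ioi ht₀.le).symm
  rw [hsplit, lintegral_union measurableSet_Ioi Ioc_disjoint_Ioi_same]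
  have head : ∫⁻ t in Ioc (0:ℝ) t₀,
      (η.restrict U) {y | ENNReal.ofReal t < maxB c₀ n (η.withDensity f) y} ≤
      ENNReal.ofReal t₀ * η U := by
    calc ∫⁻ t in Ioc (0:ℝ) t₀,
        (η.restrict U) {y | ENNReal.ofReal t < maxB c₀ n (η.withDensity f) y}
        ≤ ∫⁻ _ in Ioc (0:ℝ) t₀, η U := by
          apply lintegral_mono
          intro t
          show (η.restrict U) {y | ENNReal.ofReal t < maxB c₀ n (η.withDensity f) y} ≤ η U
          rw [Measure.restrict_apply (hsetm t)]
          exact measure_mono inter_subset_right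
      _ = η U * ENNReal.ofReal t₀ := by
          rw [setLIntegral_const, Real.volume_Ioc, sub_zero]
      _ = ENNReal.ofReal t₀ * η U := mul_comm _ _
  have tail : ∫⁻ t in Ioi t₀,
      (η.restrict U) {y | ENNReal.ofReal t < maxB c₀ n (η.withDensity f) y} ≤
      4 * (N + 1) * (ENNReal.ofReal t₀)⁻¹ * T2 := by
    have key : ∀ t : ℝ, t₀ < t →
        (η.restrict U) {y | ENNReal.ofReal t < maxB c₀ n (η.withDensity f) y} ≤
        ENNReal.ofReal (t ^ (-2 : ℝ)) * (4 * (N + 1) * T2) := by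
      intro t ht'
      have ht : 0 < t := ht₀.trans ht'
      have ht2 : 0 < t / 2 := by linarith
      have ht2ne : ENNReal.ofReal (t/2) ≠ 0 := by simp [ht2]
      set f₁ : α → ℝ≥0∞ := fun x => if ENNReal.ofReal (t/2) < f x then f x else 0 with hf₁
      have hf₁m : Measurable f₁ :=
        Measurable.ite (measurableSet_lt measurable_const hf) hf measurable_const
      have hsub : {y | ENNReal.ofReal t < maxB c₀ n (η.withDensity f) y} ⊆
          {y | ENNReal.ofReal (t/2) < maxB c₀ n (η.withDensity f₁) y} := by
        intro y hy
        simp only [mem_setOf_eq] at hy ⊢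
        by_contra hcon
        push_neg at hcon
        have hfle : ∀ x, f x ≤ f₁ x + ENNReal.ofReal (t/2) := by
          intro x
          by_cases hx : ENNReal.ofReal (t/2) < f x
          · simp only [hf₁, if_pos hx]; exact le_self_add
          · push_neg at hx
            simp only [hf₁, if_neg (not_lt.2 hx)]
            simpa using hx
        have hmono : η.withDensity f ≤ η.withDensity f₁ + η.withDensity
            (fun _ => ENNReal.ofReal (t/2)) := by
          rw [← withDensity_add_right _ (measurable_const)]
          exact withDensity_mono (Filter.Eventually.of_forall hfle)
        have h1 : maxB c₀ n (η.withDensity f) y ≤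
            maxB c₀ n (η.withDensity f₁) y + ENNReal.ofReal (t/2) := by
          calc maxB c₀ n (η.withDensity f) y
              ≤ maxB c₀ n (η.withDensity f₁ + η.withDensity
                  (fun _ => ENNReal.ofReal (t/2))) y := maxB_mono n hmono y
            _ ≤ maxB c₀ n (η.withDensity f₁) y + maxB c₀ n (η.withDensity
                  (fun _ => ENNReal.ofReal (t/2))) y := maxB_add_le _ _ _ _ _
            _ ≤ maxB c₀ n (η.withDensity f₁) y + ENNReal.ofReal (t/2) := by
                apply add_le_add_right
                exact maxB_withDensity_le_const η hgrow (fun x => le_refl _) y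
        have : maxB c₀ n (η.withDensity f) y ≤ ENNReal.ofReal t := by
          calc maxB c₀ n (η.withDensity f) y ≤ maxB c₀ n (η.withDensity f₁) y
              + ENNReal.ofReal (t/2) := h1
            _ ≤ ENNReal.ofReal (t/2) + ENNReal.ofReal (t/2) := add_le_add_left hcon _
            _ = ENNReal.ofReal t := by
                rw [← ENNReal.ofReal_add ht2.le ht2.le]; norm_num
        exact absurd hy (not_lt.2 this)
      have hweak := maxB_weak N hτ hN hc₀ hn η (η.withDensity f₁) hgrow ht2
      have hint : (η.withDensity f₁) Set.univ ≤ (ENNReal.ofReal (t/2))⁻¹ * T2 := by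
        rw [withDensity_apply _ MeasurableSet.univ, Measure.restrict_univ]
        calc ∫⁻ x, f₁ x ∂η ≤ ∫⁻ x, (ENNReal.ofReal (t/2))⁻¹ * f x ^ 2 ∂η := by
              apply lintegral_mono
              intro x
              by_cases hx : ENNReal.ofReal (t/2) < f x
              · simp only [hf₁, if_pos hx]
                calc f x = (ENNReal.ofReal (t/2))⁻¹ * (ENNReal.ofReal (t/2) * f x) := by
                      rw [← mul_assoc, ENNReal.inv_mul_cancel ht2ne ENNReal.ofReal_ne_top,
                        one_mul]
                  _ ≤ (ENNReal.ofReal (t/2))⁻¹ * f x ^ 2 := by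
                      apply mul_le_mul_right
                      rw [sq]
                      exact mul_le_mul_left hx.le _
              · simp only [hf₁, if_neg hx]
                exact zero_le
          _ = (ENNReal.ofReal (t/2))⁻¹ * T2 := lintegral_const_mul _ (hf.pow_const 2)
      calc (η.restrict U) {y | ENNReal.ofReal t < maxB c₀ n (η.withDensity f) y}
          ≤ η {y | ENNReal.ofReal t < maxB c₀ n (η.withDensity f) y} := by
            rw [Measure.restrict_apply (hsetm t)]
            exact measure_mono inter_subset_left
        _ ≤ η {y | ENNReal.ofReal (t/2) < maxB c₀ n (η.withDensity f₁) y} :=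
            measure_mono hsub
        _ ≤ (N + 1) * (ENNReal.ofReal (t/2))⁻¹ * (η.withDensity f₁) Set.univ := hweak
        _ ≤ (N + 1) * (ENNReal.ofReal (t/2))⁻¹ * ((ENNReal.ofReal (t/2))⁻¹ * T2) :=
            mul_le_mul_right hint _
        _ = ENNReal.ofReal (t ^ (-2 : ℝ)) * (4 * (N + 1) * T2) := by
            have hprod : (ENNReal.ofReal (t/2))⁻¹ * (ENNReal.ofReal (t/2))⁻¹
                = 4 * ENNReal.ofReal (t ^ (-2:ℝ)) := by
              rw [← ENNReal.ofReal_inv_of_pos ht2, ← ENNReal.ofReal_mul (by positivity)]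
              rw [show (t/2)⁻¹ * (t/2)⁻¹ = 4 * t ^ (-2:ℝ) by
                rw [Real.rpow_neg ht.le, show (2:ℝ) = ((2:ℕ):ℝ) by norm_num,
                  Real.rpow_natCast]
                field_simp
                ring]
              rw [ENNReal.ofReal_mul (by norm_num)]
              norm_num
            calc ((N:ℝ≥0∞) + 1) * (ENNReal.ofReal (t/2))⁻¹ * ((ENNReal.ofReal (t/2))⁻¹ * T2)
                = ((ENNReal.ofReal (t/2))⁻¹ * (ENNReal.ofReal (t/2))⁻¹) * (((N:ℝ≥0∞)+1) * T2) := by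
                  ring
              _ = 4 * ENNReal.ofReal (t ^ (-2:ℝ)) * (((N:ℝ≥0∞)+1) * T2) := by rw [hprod]
              _ = ENNReal.ofReal (t ^ (-2:ℝ)) * (4 * ((N:ℝ≥0∞) + 1) * T2) := by ring
    calc ∫⁻ t in Ioi t₀,
        (η.restrict U) {y | ENNReal.ofReal t < maxB c₀ n (η.withDensity f) y}
        ≤ ∫⁻ t in Ioi t₀, ENNReal.ofReal (t ^ (-2 : ℝ)) * (4 * (N + 1) * T2) := by
          apply setLIntegral_mono (by fun_prop) (fun t ht => key t ht)
      _ = (∫⁻ t in Ioi t₀, ENNReal.ofReal (t ^ (-2 : ℝ))) * (4 * (N + 1) * T2) := by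
          rw [lintegral_mul_const]
          fun_prop
      _ = ENNReal.ofReal (t₀ ^ ((-2:ℝ) + 1) / (-((-2:ℝ) + 1))) * (4 * (N + 1) * T2) := by
          rw [lintegral_Ioi_ofReal_rpow ht₀ (by norm_num)]
      _ = 4 * (N + 1) * (ENNReal.ofReal t₀)⁻¹ * T2 := by
          norm_num
          rw [Real.rpow_neg_one, ENNReal.ofReal_inv_of_pos ht₀]
          ring
  exact add_le_add head tail

/-- Geometric lemma: any point of `B` is within `diam A + diam B + inf-dist` of any point of
`A`. -/
lemma edist_le_diam_add_inf {A B : Set α} {y z : α} (hy : y ∈ B) (hz : z ∈ A)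
    {La Lb : ℝ≥0∞} (hA : EMetric.diam A ≤ La) (hB : EMetric.diam B ≤ Lb) :
    edist y z ≤ La + Lb + ⨅ x' ∈ A, EMetric.infEdist x' B := by
  have step1 : ∀ x' ∈ A, edist y z ≤ La + Lb + EMetric.infEdist x' B := by
    intro x' hx'
    rw [EMetric.infEdist, Metric.infEDist, ENNReal.add_iInf]
    refine le_iInf fun w => ?_
    rw [ENNReal.add_iInf]
    refine le_iInf fun hw => ?_
    calc edist y z ≤ edist y w + edist w x' + edist x' z := edist_triangle4 y w x' z
      _ ≤ Lb + edist x' w + La := by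
          refine add_le_add (add_le_add ?_ ?_) ?_
          · exact (EMetric.edist_le_diam_of_mem hy hw).trans hB
          · rw [edist_comm]
          · exact (EMetric.edist_le_diam_of_mem hx' hz).trans hA
      _ = La + Lb + edist x' w := by ring
  rw [ENNReal.add_iInf]
  refine le_iInf fun x' => ?_
  rw [ENNReal.add_iInf]
  exact le_iInf fun hx' => step1 x' hx'

/-- Writing `d ^ (-p)` as an integral of the indicator of `{d < t}`. -/
lemma rpow_neg_eq_lintegral_indicator {d : ℝ≥0∞} (hd : d ≠ 0) {p : ℝ} (hp : 0 < p) :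
    d ^ (-p) = ∫⁻ t in Ioi (0:ℝ),
      Set.indicator {t : ℝ | d < ENNReal.ofReal t}
        (fun t => ENNReal.ofReal (p * t ^ (-p - 1))) t := by
  rcases eq_or_ne d ⊤ with htop | hfin
  · rw [htop, ENNReal.top_rpow_of_neg (neg_neg_iff_pos.2 hp)]
    have : {t : ℝ | (⊤:ℝ≥0∞) < ENNReal.ofReal t} = ∅ := by
      ext t; simp [(ENNReal.ofReal_lt_top).not_gt]
    symm
    simp [this]
  · have hdr : 0 < d.toReal := ENNReal.toReal_pos hd hfin
    have hset : {t : ℝ | d < ENNReal.ofReal t} = Ioi d.toReal := by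
      ext t
      simp only [mem_setOf_eq, mem_Ioi]
      exact ENNReal.lt_ofReal_iff_toReal_lt hfin
    rw [hset, lintegral_indicator measurableSet_Ioi, Measure.restrict_restrict measurableSet_Ioi,
      inter_eq_left.2 (Ioi_subset_Ioi hdr.le)]
    have hconst : ∀ t : ℝ, ENNReal.ofReal (p * t ^ (-p - 1)) =
        ENNReal.ofReal p * ENNReal.ofReal (t ^ (-p - 1)) := fun t =>
      ENNReal.ofReal_mul hp.le
    simp only [hconst]
    rw [lintegral_const_mul _ (by fun_prop), lintegral_Ioi_ofReal_rpow hdr (by linarith)]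
    rw [← ENNReal.ofReal_mul hp.le]
    have : p * (d.toReal ^ (-p - 1 + 1) / (-(-p - 1 + 1))) = d.toReal ^ (-p) := by
      have : -p - 1 + 1 = -p := by ring
      rw [this]
      field_simp
    rw [this, ← ENNReal.ofReal_rpow_of_pos hdr, ENNReal.ofReal_toReal hfin]

/-- Key estimate: a weighted sum of negative powers of distances against integrals over
disjoint sets is controlled by the maximal function. -/
lemma key_sum_le {ι : Type*} (F' : Finset ι) (A : ι → Set α) (hA : ∀ i, MeasurableSet (A i))
    (hdisj : Set.PairwiseDisjoint (↑F' : Set ι) A) {c₀ : ℝ} (hc₀ : 0 < c₀) {n : ℕ}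
    (η : Measure α)
    (f : α → ℝ≥0∞) (hf : Measurable f) (y : α) (d : ι → ℝ≥0∞) {b : ℝ} (hb : 0 < b)
    (hbd : ∀ i ∈ F', ENNReal.ofReal b ≤ d i)
    (hball : ∀ i ∈ F', ∀ z ∈ A i, edist y z ≤ d i)
    {p γ : ℝ} (hγ : 0 < γ) (hpγ : p = n + γ) :
    ∑ i ∈ F', d i ^ (-p) * ∫⁻ x in A i, f x ∂η ≤
      ENNReal.ofReal (p / γ * c₀ * b ^ (-γ)) * maxB c₀ n (η.withDensity f) y := by
  have hp : 0 < p := by rw [hpγ]; positivity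
  have hd0 : ∀ i ∈ F', d i ≠ 0 := fun i hi =>
    (lt_of_lt_of_le (by simp [hb] : (0:ℝ≥0∞) < ENNReal.ofReal b) (hbd i hi)).ne'
  set M := maxB c₀ n (η.withDensity f) y with hM
  calc ∑ i ∈ F', d i ^ (-p) * ∫⁻ x in A i, f x ∂η
      = ∑ i ∈ F', ∫⁻ t in Ioi (0:ℝ),
          Set.indicator {t : ℝ | d i < ENNReal.ofReal t}
            (fun t => ENNReal.ofReal (p * t ^ (-p - 1))) t * ∫⁻ x in A i, f x ∂η := by
        refine Finset.sum_congr rfl fun i hi => ?_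
        rw [rpow_neg_eq_lintegral_indicator (hd0 i hi) hp,
          lintegral_mul_const _ (by
            apply Measurable.indicator (by fun_prop)
            exact measurableSet_lt measurable_const ENNReal.measurable_ofReal)]
    _ = ∫⁻ t in Ioi (0:ℝ), ∑ i ∈ F',
          Set.indicator {t : ℝ | d i < ENNReal.ofReal t}
            (fun t => ENNReal.ofReal (p * t ^ (-p - 1))) t * ∫⁻ x in A i, f x ∂η := by
        rw [lintegral_finset_sum]
        intro i hi
        apply Measurable.mul _ measurable_const
        apply Measurable.indicator (by fun_prop)
        exact measurableSet_lt measurable_const ENNReal.measurable_ofReal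
    _ ≤ ∫⁻ t in Ioi (0:ℝ), Set.indicator (Ioi b)
          (fun t => ENNReal.ofReal (p * t ^ (-p - 1)) * (M * ENNReal.ofReal (c₀ * t ^ n))) t := by
        apply setLIntegral_mono' measurableSet_Ioi
        intro t ht
        rw [mem_Ioi] at ht
        by_cases htb : b < t
        · rw [Set.indicator_of_mem (mem_Ioi.2 htb)]
          -- the terms with `d i ≥ t` vanish
          have hsummand : ∀ i ∈ F',
              Set.indicator {t : ℝ | d i < ENNReal.ofReal t}
                (fun t => ENNReal.ofReal (p * t ^ (-p - 1))) t * ∫⁻ x in A i, f x ∂η =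
              (if d i < ENNReal.ofReal t then (1:ℝ≥0∞) else 0) *
                ENNReal.ofReal (p * t ^ (-p - 1)) * ∫⁻ x in A i, f x ∂η := by
            intro i hi
            by_cases hcase : d i < ENNReal.ofReal t
            · rw [Set.indicator_of_mem (show t ∈ {t : ℝ | d i < ENNReal.ofReal t} from hcase),
                if_pos hcase, one_mul]
            · rw [Set.indicator_of_notMem
                (show t ∉ {t : ℝ | d i < ENNReal.ofReal t} from hcase), if_neg hcase,
                zero_mul, zero_mul, zero_mul]
          rw [Finset.sum_congr rfl hsummand]
          have hfilter : ∑ i ∈ F', (if d i < ENNReal.ofReal t then (1:ℝ≥0∞) else 0) *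
                ENNReal.ofReal (p * t ^ (-p - 1)) * ∫⁻ x in A i, f x ∂η =
              ∑ i ∈ F'.filter (fun i => d i < ENNReal.ofReal t),
                ENNReal.ofReal (p * t ^ (-p - 1)) * ∫⁻ x in A i, f x ∂η := by
            rw [Finset.sum_filter]
            refine Finset.sum_congr rfl fun i hi => ?_
            by_cases hcase : d i < ENNReal.ofReal t
            · rw [if_pos hcase, if_pos hcase, one_mul]
            · rw [if_neg hcase, if_neg hcase, zero_mul, zero_mul]
          rw [hfilter, ← Finset.mul_sum]
          have hsum_le : ∑ i ∈ F'.filter (fun i => d i < ENNReal.ofReal t),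
              ∫⁻ x in A i, f x ∂η ≤ M * ENNReal.ofReal (c₀ * t ^ n) := by
            have hsub : ∀ i ∈ F'.filter (fun i => d i < ENNReal.ofReal t),
                A i ⊆ ball y t := by
              intro i hi z hz
              rw [Finset.mem_filter] at hi
              have h1 : edist y z ≤ d i := hball i hi.1 z hz
              have h2 : edist y z < ENNReal.ofReal t := h1.trans_lt hi.2
              rw [mem_ball, dist_comm]
              exact edist_lt_ofReal.1 h2
            calc ∑ i ∈ F'.filter (fun i => d i < ENNReal.ofReal t), ∫⁻ x in A i, f x ∂η
                = ∫⁻ x in ⋃ i ∈ F'.filter (fun i => d i < ENNReal.ofReal t), A i, f x ∂η := by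
                  rw [lintegral_biUnion_finset (hdisj.subset (by
                    intro i hi
                    exact (Finset.mem_filter.1 hi).1)) (fun i _ => hA i)]
              _ ≤ ∫⁻ x in ball y t, f x ∂η := by
                  apply lintegral_mono_set
                  exact iUnion₂_subset hsub
              _ = (η.withDensity f) (ball y t) := (withDensity_apply _ measurableSet_ball).symm
              _ ≤ M * ENNReal.ofReal (c₀ * t ^ n) :=
                  measure_ball_le_maxB hc₀ n (η.withDensity f) y ht
          exact mul_le_mul_right hsum_le _
        · -- t ≤ b : all terms vanish
          rw [Set.indicator_of_notMem (by simpa using htb)]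
          push_neg at htb
          have : ∀ i ∈ F',
              Set.indicator {t : ℝ | d i < ENNReal.ofReal t}
                (fun t => ENNReal.ofReal (p * t ^ (-p - 1))) t * ∫⁻ x in A i, f x ∂η = 0 := by
            intro i hi
            have : ¬ (d i < ENNReal.ofReal t) := by
              apply not_lt.2
              exact le_trans (ENNReal.ofReal_le_ofReal htb) (hbd i hi)
            rw [Set.indicator_of_notMem
              (show t ∉ {t : ℝ | d i < ENNReal.ofReal t} from this), zero_mul]
          rw [Finset.sum_congr rfl this, Finset.sum_const, smul_zero]
    _ = ∫⁻ t in Ioi b, ENNReal.ofReal (p * t ^ (-p - 1)) * (M * ENNReal.ofReal (c₀ * t ^ n)) := by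
        rw [lintegral_indicator measurableSet_Ioi, Measure.restrict_restrict measurableSet_Ioi,
          inter_eq_left.2 (Ioi_subset_Ioi hb.le)]
    _ = ∫⁻ t in Ioi b, ENNReal.ofReal (p * c₀ * t ^ (-γ - 1)) * M := by
        apply setLIntegral_congr_fun measurableSet_Ioi
        intro t ht
        rw [mem_Ioi] at ht
        have ht0 : 0 < t := hb.trans ht
        have h2 : t ^ (-p - 1) * t ^ ((n:ℕ):ℝ) = t ^ (-γ - 1) := by
          rw [← Real.rpow_add ht0]
          congr 1
          rw [hpγ]
          ring
        have key : (p * t ^ (-p - 1)) * (c₀ * t ^ n) = p * c₀ * t ^ (-γ - 1) := by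
          calc (p * t ^ (-p - 1)) * (c₀ * t ^ n)
              = p * c₀ * (t ^ (-p - 1) * t ^ ((n:ℕ):ℝ)) := by
                rw [Real.rpow_natCast]
                ring
            _ = p * c₀ * t ^ (-γ - 1) := by rw [h2]
        show ENNReal.ofReal (p * t ^ (-p - 1)) * (M * ENNReal.ofReal (c₀ * t ^ n)) =
          ENNReal.ofReal (p * c₀ * t ^ (-γ - 1)) * M
        calc ENNReal.ofReal (p * t ^ (-p - 1)) * (M * ENNReal.ofReal (c₀ * t ^ n))
            = ENNReal.ofReal (p * t ^ (-p - 1)) * ENNReal.ofReal (c₀ * t ^ n) * M := by ring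
          _ = ENNReal.ofReal ((p * t ^ (-p - 1)) * (c₀ * t ^ n)) * M := by
              rw [← ENNReal.ofReal_mul (by positivity : (0:ℝ) ≤ p * t ^ (-p - 1))]
          _ = ENNReal.ofReal (p * c₀ * t ^ (-γ - 1)) * M := by rw [key]
    _ ≤ ENNReal.ofReal (p / γ * c₀ * b ^ (-γ)) * M := by
        rw [lintegral_mul_const _ (by fun_prop)]
        apply mul_le_mul_left
        have hpc : ∀ t : ℝ, ENNReal.ofReal (p * c₀ * t ^ (-γ - 1)) =
            ENNReal.ofReal (p * c₀) * ENNReal.ofReal (t ^ (-γ - 1)) := fun t =>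
          ENNReal.ofReal_mul (by positivity)
        simp only [hpc]
        rw [lintegral_const_mul _ (by fun_prop), lintegral_Ioi_ofReal_rpow hb (by linarith)]
        rw [← ENNReal.ofReal_mul (by positivity)]
        apply ENNReal.ofReal_le_ofReal
        have : -γ - 1 + 1 = -γ := by ring
        rw [this, neg_neg]
        apply le_of_eq
        field_simp

/-- The `L²(η)` bound for the auxiliary function
`g = Σ_i ( Σ_{j≠i} ℓ_j^γ η(S_j) D(i,j)^{−n−γ} ) χ_{S_i}`, where
`D(i,j) = ℓ_i + ℓ_j + dist(S_i, S_j)`, for a measure `η` on `ℝ^{n+1}` with `n`-polynomial growth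
with constant `c₀`: one has `‖g‖_{L²(η)} ≤ C(n,γ) c₀ η(⋃ S_i)^{1/2}` (stated here with both
sides squared). -/
theorem auxiliary_function_L2_bound (n : ℕ) (hn : 1 ≤ n) (γ : ℝ) (hγ : 0 < γ) :
    ∃ C : ℝ, 0 < C ∧ ∀ c₀ : ℝ, 0 < c₀ →
      ∀ η : Measure (EuclideanSpace ℝ (Fin (n + 1))), IsFiniteMeasure η →
        (∀ (x : EuclideanSpace ℝ (Fin (n + 1))) (r : ℝ), 0 < r →
          η (ball x r) ≤ ENNReal.ofReal (c₀ * r ^ n)) →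
        ∀ (ι : Type) (_ : Countable ι) (S : ι → Set (EuclideanSpace ℝ (Fin (n + 1)))),
          (∀ i, MeasurableSet (S i)) → Pairwise (Function.onFun Disjoint S) →
          ∀ ℓ : ι → ℝ, (∀ i, 0 < ℓ i) →
          (∀ i, EMetric.diam (S i) ≤ ENNReal.ofReal (ℓ i)) →
          ∫⁻ x, (∑' i, Set.indicator (S i)
              (fun _ => ∑' j, if j = i then 0 else
                ENNReal.ofReal (ℓ j ^ γ) * η (S j) *
                  (ENNReal.ofReal (ℓ i) + ENNReal.ofReal (ℓ j) +
                    ⨅ x' ∈ S i, EMetric.infEdist x' (S j)) ^ (-(n : ℝ) - γ)) x) ^ 2 ∂η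
            ≤ ENNReal.ofReal ((C * c₀) ^ 2) * η (⋃ i, S i) := by
  classical
  obtain ⟨N, τ, hτ, hN⟩ :=
    HasBesicovitchCovering.no_satelliteConfig (α := EuclideanSpace ℝ (Fin (n + 1)))
  set p : ℝ := (n : ℝ) + γ with hp_def
  have hp : 0 < p := by positivity
  set C : ℝ := p / γ * (1 + 4 * ((N : ℝ) + 1)) with hC_def
  have hC : 0 < C := by positivity
  refine ⟨C, hC, ?_⟩
  intro c₀ hc₀ η hfinη hgrow ι hcount S hSm hSd ℓ hℓ hdiam
  haveI := hfinη
  set L : ι → ℝ≥0∞ := fun i => ENNReal.ofReal (ℓ i) with hL_def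
  set D : ι → ι → ℝ≥0∞ :=
    fun i j => L i + L j + ⨅ x' ∈ S i, EMetric.infEdist x' (S j) with hD_def
  set K : ι → ι → ℝ≥0∞ := fun i j => if j = i then 0 else
    ENNReal.ofReal (ℓ j ^ γ) * η (S j) * (D i j) ^ (-(n : ℝ) - γ) with hK_def
  set a : ι → ℝ≥0∞ := fun i => ∑' j, K i j with ha_def
  have hexp : -(n : ℝ) - γ = -p := by rw [hp_def]; ring
  have hL0 : ∀ i, L i ≠ 0 := fun i => by
    simp only [hL_def, ne_eq, ENNReal.ofReal_eq_zero, not_le]; exact hℓ i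
  have hLtop : ∀ i, L i ≠ ⊤ := fun i => ENNReal.ofReal_ne_top
  have hLD : ∀ i j, L i ≤ D i j := fun i j => le_self_add.trans le_self_add
  have hLD' : ∀ i j, L j ≤ D i j := fun i j => le_add_self.trans le_self_add
  -- finiteness of the coefficients `a i`
  have hK_le : ∀ i j, K i j ≤ η (S j) * (L i) ^ (-(n : ℝ)) := by
    intro i j
    simp only [hK_def]
    by_cases hij : j = i
    · simp [hij]
    · rw [if_neg hij]
      rcases eq_or_ne (D i j) ⊤ with hDtop | hDne
      · rw [hDtop, ENNReal.top_rpow_of_neg (by rw [hexp]; linarith), mul_zero]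
        exact zero_le
      · have hD0 : D i j ≠ 0 := fun h => hL0 i (le_antisymm (h ▸ hLD i j) zero_le)
        have hofReal : ENNReal.ofReal (ℓ j ^ γ) = L j ^ γ :=
          (ENNReal.ofReal_rpow_of_pos (hℓ j)).symm
        have hsplit : D i j ^ (-(n : ℝ) - γ) = D i j ^ (-γ) * D i j ^ (-(n : ℝ)) := by
          rw [← ENNReal.rpow_add _ _ hD0 hDne]
          congr 1
          ring
        have hb1 : L j ^ γ * D i j ^ (-γ) ≤ 1 := by
          rw [ENNReal.rpow_neg]
          have h1 : L j ^ γ ≤ D i j ^ γ := ENNReal.rpow_le_rpow (hLD' i j) hγ.le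
          have h2 : D i j ^ γ ≠ 0 := by
            intro h
            rcases ENNReal.rpow_eq_zero_iff.1 h with ⟨h0, _⟩ | ⟨_, hlt⟩
            · exact hD0 h0
            · exact absurd hlt (not_lt.2 hγ.le)
          have h3 : D i j ^ γ ≠ ⊤ := ENNReal.rpow_ne_top_of_nonneg hγ.le hDne
          calc L j ^ γ * (D i j ^ γ)⁻¹ ≤ D i j ^ γ * (D i j ^ γ)⁻¹ :=
                mul_le_mul_left h1 _
            _ = 1 := ENNReal.mul_inv_cancel h2 h3
        have hb2 : D i j ^ (-(n : ℝ)) ≤ L i ^ (-(n : ℝ)) := by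
          rw [ENNReal.rpow_neg, ENNReal.rpow_neg]
          exact ENNReal.inv_le_inv' (ENNReal.rpow_le_rpow (hLD i j) (by positivity))
        calc ENNReal.ofReal (ℓ j ^ γ) * η (S j) * D i j ^ (-(n : ℝ) - γ)
            = (L j ^ γ * D i j ^ (-γ)) * (η (S j) * D i j ^ (-(n : ℝ))) := by
              rw [hofReal, hsplit]
              ring
          _ ≤ 1 * (η (S j) * L i ^ (-(n : ℝ))) :=
              mul_le_mul' hb1 (mul_le_mul_right hb2 _)
          _ = η (S j) * L i ^ (-(n : ℝ)) := one_mul _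
  have hsum_m : ∑' j, η (S j) = η (⋃ i, S i) := (measure_iUnion hSd hSm).symm
  have ha_fin : ∀ i, a i ≠ ⊤ := by
    intro i
    have h1 : a i ≤ η Set.univ * L i ^ (-(n : ℝ)) := by
      calc a i ≤ ∑' j, η (S j) * L i ^ (-(n : ℝ)) := ENNReal.tsum_le_tsum (hK_le i)
        _ = (∑' j, η (S j)) * L i ^ (-(n : ℝ)) := ENNReal.tsum_mul_right
        _ ≤ η Set.univ * L i ^ (-(n : ℝ)) := by
            apply mul_le_mul_left
            rw [hsum_m]
            exact measure_mono (subset_univ _)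
    have h2 : η Set.univ * L i ^ (-(n : ℝ)) ≠ ⊤ := by
      apply ENNReal.mul_ne_top (measure_ne_top η _)
      rw [ENNReal.rpow_neg]
      refine ENNReal.inv_ne_top.2 ?_
      intro h
      rw [ENNReal.rpow_eq_zero_iff] at h
      rcases h with ⟨h, _⟩ | ⟨h, _⟩
      · exact hL0 i h
      · exact hLtop i h
    exact fun h => h2 (le_antisymm le_top (h ▸ h1))
  have hmem_unique : ∀ (x : EuclideanSpace ℝ (Fin (n+1))) i j, i ≠ j → x ∈ S i → x ∉ S j :=
    fun x i j hij hx => Set.disjoint_left.1 (hSd hij) hx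
  -- rewrite the left-hand side
  show ∫⁻ x, (∑' i, Set.indicator (S i) (fun _ => a i) x) ^ 2 ∂η ≤
    ENNReal.ofReal ((C * c₀) ^ 2) * η (⋃ i, S i)
  have hpoint : ∀ x, (∑' i, Set.indicator (S i) (fun _ => a i) x) ^ 2 =
      ∑' i, Set.indicator (S i) (fun _ => a i ^ 2) x := by
    intro x
    by_cases hx : ∃ i, x ∈ S i
    · obtain ⟨i0, hi0⟩ := hx
      have h1 : (∑' i, Set.indicator (S i) (fun _ => a i) x) = a i0 := by
        rw [tsum_eq_single i0 (fun j hj =>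
          Set.indicator_of_notMem (hmem_unique x i0 j (Ne.symm hj) hi0) _)]
        exact Set.indicator_of_mem hi0 _
      have h2 : (∑' i, Set.indicator (S i) (fun _ => a i ^ 2) x) = a i0 ^ 2 := by
        rw [tsum_eq_single i0 (fun j hj =>
          Set.indicator_of_notMem (hmem_unique x i0 j (Ne.symm hj) hi0) _)]
        exact Set.indicator_of_mem hi0 _
      rw [h1, h2]
    · push_neg at hx
      have h1 : (∑' i, Set.indicator (S i) (fun _ => a i) x) = 0 := by
        rw [tsum_congr (fun i => Set.indicator_of_notMem (hx i) _), tsum_zero]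
      have h2 : (∑' i, Set.indicator (S i) (fun _ => a i ^ 2) x) = 0 := by
        rw [tsum_congr (fun i => Set.indicator_of_notMem (hx i) _), tsum_zero]
      rw [h1, h2]
      norm_num
  have hLHS : ∫⁻ x, (∑' i, Set.indicator (S i) (fun _ => a i) x) ^ 2 ∂η =
      ∑' i, a i ^ 2 * η (S i) := by
    calc ∫⁻ x, (∑' i, Set.indicator (S i) (fun _ => a i) x) ^ 2 ∂η
        = ∫⁻ x, ∑' i, Set.indicator (S i) (fun _ => a i ^ 2) x ∂η := lintegral_congr hpoint
      _ = ∑' i, ∫⁻ x, Set.indicator (S i) (fun _ => a i ^ 2) x ∂η :=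
          lintegral_tsum fun i => (measurable_const.indicator (hSm i)).aemeasurable
      _ = ∑' i, a i ^ 2 * η (S i) := by
          refine tsum_congr fun i => ?_
          rw [lintegral_indicator (hSm i), setLIntegral_const]
  rw [hLHS, ENNReal.tsum_eq_iSup_sum]
  refine iSup_le fun F => ?_
  -- union and trivial cases
  have hUm : MeasurableSet (⋃ i, S i) := MeasurableSet.iUnion hSm
  have hUfin : η (⋃ i, S i) ≠ ⊤ := measure_ne_top η _
  rcases eq_or_ne (η (⋃ i, S i)) 0 with hU0 | hU0
  · have hz : ∀ i ∈ F, a i ^ 2 * η (S i) = 0 := by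
      intro i _
      have : η (S i) = 0 :=
        le_antisymm (hU0 ▸ measure_mono (subset_iUnion S i)) zero_le
      rw [this, mul_zero]
    rw [Finset.sum_eq_zero hz]
    exact zero_le
  -- the truncated function g
  set g : EuclideanSpace ℝ (Fin (n+1)) → ℝ≥0∞ :=
    fun x => ∑ i ∈ F, Set.indicator (S i) (fun _ => a i) x with hg_def
  have hg_meas : Measurable g := by
    apply Finset.measurable_sum
    exact fun i _ => measurable_const.indicator (hSm i)
  have hg_int : ∀ i ∈ F, ∫⁻ x in S i, g x ∂η = a i * η (S i) := by
    intro i hi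
    simp only [hg_def]
    rw [lintegral_finset_sum _ (fun i' _ => measurable_const.indicator (hSm i'))]
    rw [Finset.sum_eq_single i]
    · rw [lintegral_indicator (hSm i), Measure.restrict_restrict (hSm i),
        inter_self, setLIntegral_const, mul_comm]
    · intro i' _ hi'
      rw [lintegral_indicator (hSm i'), Measure.restrict_restrict (hSm i'),
        (hSd hi').inter_eq, setLIntegral_const]
      simp
    · intro h
      exact absurd hi h
  have hgsq : ∫⁻ x, g x ^ 2 ∂η = ∑ i ∈ F, a i ^ 2 * η (S i) := by
    have hgpt : ∀ x, g x ^ 2 = ∑ i ∈ F, Set.indicator (S i) (fun _ => a i ^ 2) x := by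
      intro x
      by_cases hx : ∃ i ∈ F, x ∈ S i
      · obtain ⟨i0, hi0F, hi0⟩ := hx
        have h1 : g x = a i0 := by
          simp only [hg_def]
          rw [Finset.sum_eq_single i0 (fun j _ hj =>
            Set.indicator_of_notMem (hmem_unique x i0 j (Ne.symm hj) hi0) _)
            (fun h => absurd hi0F h)]
          exact Set.indicator_of_mem hi0 _
        have h2 : ∑ i ∈ F, Set.indicator (S i) (fun _ => a i ^ 2) x = a i0 ^ 2 := by
          rw [Finset.sum_eq_single i0 (fun j _ hj =>
            Set.indicator_of_notMem (hmem_unique x i0 j (Ne.symm hj) hi0) _)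
            (fun h => absurd hi0F h)]
          exact Set.indicator_of_mem hi0 _
        rw [h1, h2]
      · push_neg at hx
        have h1 : g x = 0 := by
          simp only [hg_def]
          exact Finset.sum_eq_zero fun i hi => Set.indicator_of_notMem (hx i hi) _
        have h2 : ∑ i ∈ F, Set.indicator (S i) (fun _ => a i ^ 2) x = 0 :=
          Finset.sum_eq_zero fun i hi => Set.indicator_of_notMem (hx i hi) _
        rw [h1, h2]
        norm_num
    calc ∫⁻ x, g x ^ 2 ∂η
        = ∫⁻ x, ∑ i ∈ F, Set.indicator (S i) (fun _ => a i ^ 2) x ∂η :=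
          lintegral_congr hgpt
      _ = ∑ i ∈ F, ∫⁻ x, Set.indicator (S i) (fun _ => a i ^ 2) x ∂η :=
          lintegral_finset_sum _ fun i _ => measurable_const.indicator (hSm i)
      _ = ∑ i ∈ F, a i ^ 2 * η (S i) := by
          refine Finset.sum_congr rfl fun i _ => ?_
          rw [lintegral_indicator (hSm i), setLIntegral_const]
  set T : ℝ≥0∞ := ∑ i ∈ F, a i ^ 2 * η (S i) with hT_def
  have hT_fin : T ≠ ⊤ := by
    rw [hT_def]
    refine (ENNReal.sum_lt_top.2 fun i _ => ?_).ne
    exact ENNReal.mul_lt_top (ENNReal.pow_lt_top (ha_fin i).lt_top) (measure_lt_top η _)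
  rcases eq_or_ne T 0 with hT0 | hT0
  · rw [hT0]
    exact zero_le
  -- duality chain
  set M : EuclideanSpace ℝ (Fin (n+1)) → ℝ≥0∞ := maxB c₀ n (η.withDensity g) with hM_def
  have hM_meas : Measurable M := measurable_maxB _ _ _
  set κ₀ : ℝ≥0∞ := ENNReal.ofReal (p / γ * c₀) with hκ₀_def
  have hchain : T ≤ κ₀ * ∫⁻ y in ⋃ i, S i, M y ∂η := by
    have hperj : ∀ j, ∑ i ∈ F, K i j * (a i * η (S i)) ≤
        κ₀ * ∫⁻ y in S j, M y ∂η := by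
      intro j
      set κ₁ : ℝ≥0∞ := ENNReal.ofReal (p / γ * c₀ * ℓ j ^ (-γ)) with hκ₁_def
      set W : ℝ≥0∞ := ∑ i ∈ F.erase j, D i j ^ (-p) * ∫⁻ x in S i, g x ∂η with hW_def
      have hstepA : ∑ i ∈ F, K i j * (a i * η (S i)) =
          ENNReal.ofReal (ℓ j ^ γ) * (η (S j) * W) := by
        have h1 : ∑ i ∈ F, K i j * (a i * η (S i)) =
            ∑ i ∈ F.erase j, K i j * (a i * η (S i)) := by
          refine (Finset.sum_subset (Finset.erase_subset _ _) ?_).symm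
          intro i hiF hierase
          have hij : i = j := by
            by_contra hne
            exact hierase (Finset.mem_erase.2 ⟨hne, hiF⟩)
          simp [hij, hK_def]
        rw [h1]
        have h2 : ∀ i ∈ F.erase j, K i j * (a i * η (S i)) =
            ENNReal.ofReal (ℓ j ^ γ) * (η (S j) * (D i j ^ (-p) * ∫⁻ x in S i, g x ∂η)) := by
          intro i hi
          have hij : i ≠ j := Finset.ne_of_mem_erase hi
          have hiF : i ∈ F := Finset.mem_of_mem_erase hi
          simp only [hK_def]
          rw [if_neg (Ne.symm hij), hg_int i hiF, hexp]
          ring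
        rw [Finset.sum_congr rfl h2, ← Finset.mul_sum, ← Finset.mul_sum]
      rw [hstepA]
      have hstepB : ∀ y ∈ S j, W ≤ κ₁ * M y := by
        intro y hy
        simp only [hW_def, hκ₁_def, hM_def]
        apply key_sum_le (F.erase j) S hSm
          (fun i _ i' _ hne => hSd hne) hc₀ η g hg_meas y (fun i => D i j) (hℓ j)
        · intro i _
          exact hLD' i j
        · intro i _ z hz
          exact edist_le_diam_add_inf hy hz (hdiam i) (hdiam j)
        · exact hγ
        · rfl
      have hstepC : η (S j) * W ≤ κ₁ * ∫⁻ y in S j, M y ∂η := by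
        have h1 : η (S j) * W = ∫⁻ _ in S j, W ∂η := by
          rw [setLIntegral_const, mul_comm]
        rw [h1]
        calc ∫⁻ _ in S j, W ∂η ≤ ∫⁻ y in S j, κ₁ * M y ∂η :=
              setLIntegral_mono (by fun_prop) hstepB
          _ = κ₁ * ∫⁻ y in S j, M y ∂η := lintegral_const_mul _ hM_meas
      calc ENNReal.ofReal (ℓ j ^ γ) * (η (S j) * W)
          ≤ ENNReal.ofReal (ℓ j ^ γ) * (κ₁ * ∫⁻ y in S j, M y ∂η) :=
            mul_le_mul_right hstepC _
        _ = (ENNReal.ofReal (ℓ j ^ γ) * κ₁) * ∫⁻ y in S j, M y ∂η := by rw [mul_assoc]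
        _ = κ₀ * ∫⁻ y in S j, M y ∂η := by
            congr 1
            rw [hκ₁_def, hκ₀_def,
              ← ENNReal.ofReal_mul (Real.rpow_nonneg (hℓ j).le γ)]
            congr 1
            have hne : ℓ j ^ γ ≠ 0 := (Real.rpow_pos_of_pos (hℓ j) γ).ne'
            rw [Real.rpow_neg (hℓ j).le]
            field_simp
    calc T = ∑ i ∈ F, a i * (a i * η (S i)) := by
          rw [hT_def]
          refine Finset.sum_congr rfl fun i _ => ?_
          rw [sq]
          ring
      _ = ∑ i ∈ F, ∑' j, K i j * (a i * η (S i)) := by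
          refine Finset.sum_congr rfl fun i _ => ?_
          simp only [ha_def]
          exact ENNReal.tsum_mul_right.symm
      _ = ∑' j, ∑ i ∈ F, K i j * (a i * η (S i)) :=
          (Summable.tsum_finsetSum fun i _ => ENNReal.summable).symm
      _ ≤ ∑' j, κ₀ * ∫⁻ y in S j, M y ∂η := ENNReal.tsum_le_tsum hperj
      _ = κ₀ * ∑' j, ∫⁻ y in S j, M y ∂η := ENNReal.tsum_mul_left
      _ = κ₀ * ∫⁻ y in ⋃ i, S i, M y ∂η := by
          rw [lintegral_iUnion hSm hSd]
  -- numerical endgame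
  set u : ℝ := (η (⋃ i, S i)).toReal with hu_def
  have hu : 0 < u := ENNReal.toReal_pos hU0 hUfin
  set t : ℝ := T.toReal with ht_def
  have ht : 0 < t := ENNReal.toReal_pos hT0 hT_fin
  set t₀ : ℝ := Real.sqrt (t / u) with ht₀_def
  have ht₀ : 0 < t₀ := Real.sqrt_pos.2 (by positivity)
  have hbound := setLIntegral_maxB_le N hτ hN hc₀ hn η hgrow hg_meas hUm ht₀
  rw [hgsq] at hbound
  have hsqrt_mul : t₀ * u = Real.sqrt (t * u) := by
    have h1 : u = Real.sqrt (u ^ 2) := (Real.sqrt_sq hu.le).symm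
    calc t₀ * u = Real.sqrt (t / u) * Real.sqrt (u ^ 2) := by rw [← h1]
      _ = Real.sqrt (t / u * u ^ 2) := (Real.sqrt_mul (by positivity) _).symm
      _ = Real.sqrt (t * u) := by
          congr 1
          field_simp
  have hsqrt_div : t / t₀ = Real.sqrt (t * u) := by
    have h1 : t = Real.sqrt (t ^ 2) := (Real.sqrt_sq ht.le).symm
    calc t / t₀ = Real.sqrt (t ^ 2) / Real.sqrt (t / u) := by rw [← h1]
      _ = Real.sqrt (t ^ 2 / (t / u)) := (Real.sqrt_div (by positivity) _).symm
      _ = Real.sqrt (t * u) := by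
          congr 1
          field_simp
  have hfinal : T ≤ ENNReal.ofReal (p / γ * c₀ * ((1 + 4 * ((N:ℝ) + 1)) * Real.sqrt (t * u))) := by
    calc T ≤ κ₀ * ∫⁻ y in ⋃ i, S i, M y ∂η := hchain
      _ ≤ κ₀ * (ENNReal.ofReal t₀ * η (⋃ i, S i) +
            4 * (N + 1) * (ENNReal.ofReal t₀)⁻¹ * T) := mul_le_mul_right hbound _
      _ = ENNReal.ofReal (p / γ * c₀ * ((1 + 4 * ((N:ℝ) + 1)) * Real.sqrt (t * u))) := by
          have hηU : η (⋃ i, S i) = ENNReal.ofReal u := by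
            rw [hu_def, ENNReal.ofReal_toReal hUfin]
          have hT : T = ENNReal.ofReal t := by
            rw [ht_def, ENNReal.ofReal_toReal hT_fin]
          have hN' : ((N : ℝ≥0∞) + 1) = ENNReal.ofReal ((N : ℝ) + 1) := by
            rw [ENNReal.ofReal_add (by positivity) zero_le_one]
            simp [ENNReal.ofReal_natCast]
          have h4 : (4 : ℝ≥0∞) = ENNReal.ofReal (4 : ℝ) := by norm_num
          rw [hηU, hT, hN', h4, ← ENNReal.ofReal_inv_of_pos ht₀]
          rw [← ENNReal.ofReal_mul ht₀.le]
          rw [← ENNReal.ofReal_mul (by positivity), ← ENNReal.ofReal_mul (by positivity),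
            ← ENNReal.ofReal_mul (by positivity), ← ENNReal.ofReal_add (by positivity)
            (by positivity), ← ENNReal.ofReal_mul (by positivity)]
          congr 1
          have e1 : t₀ * u = Real.sqrt (t * u) := hsqrt_mul
          have e2 : 4 * ((N:ℝ) + 1) * t₀⁻¹ * t = 4 * ((N:ℝ) + 1) * Real.sqrt (t * u) := by
            rw [← hsqrt_div]
            ring
          rw [e1, e2]
          ring
  -- convert to reals and conclude
  have hreal : t ≤ p / γ * c₀ * ((1 + 4 * ((N:ℝ) + 1)) * Real.sqrt (t * u)) := by
    have := hfinal
    rw [ht_def] at *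
    calc T.toReal ≤ (ENNReal.ofReal
          (p / γ * c₀ * ((1 + 4 * ((N:ℝ) + 1)) * Real.sqrt (T.toReal * u)))).toReal :=
          ENNReal.toReal_mono ENNReal.ofReal_ne_top hfinal
      _ = p / γ * c₀ * ((1 + 4 * ((N:ℝ) + 1)) * Real.sqrt (T.toReal * u)) :=
          ENNReal.toReal_ofReal (by positivity)
  have hsq : t ≤ (C * c₀) ^ 2 * u := by
    have hCc : C * c₀ = p / γ * c₀ * (1 + 4 * ((N:ℝ) + 1)) := by rw [hC_def]; ring
    have h1 : Real.sqrt t * Real.sqrt t ≤ (C * c₀) * (Real.sqrt t * Real.sqrt u) := by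
      calc Real.sqrt t * Real.sqrt t = t := Real.mul_self_sqrt ht.le
        _ ≤ p / γ * c₀ * ((1 + 4 * ((N:ℝ) + 1)) * Real.sqrt (t * u)) := hreal
        _ = (C * c₀) * (Real.sqrt t * Real.sqrt u) := by
            rw [Real.sqrt_mul ht.le, hCc]
            ring
    have hst : 0 < Real.sqrt t := Real.sqrt_pos.2 ht
    have h2 : Real.sqrt t ≤ (C * c₀) * Real.sqrt u := by
      have h1' : Real.sqrt t * Real.sqrt t ≤ Real.sqrt t * ((C * c₀) * Real.sqrt u) := by
        nlinarith [h1]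
      exact le_of_mul_le_mul_left h1' hst
    calc t = Real.sqrt t * Real.sqrt t := (Real.mul_self_sqrt ht.le).symm
      _ ≤ ((C * c₀) * Real.sqrt u) * ((C * c₀) * Real.sqrt u) := by
          apply mul_le_mul h2 h2 hst.le
          positivity
      _ = (C * c₀) ^ 2 * (Real.sqrt u * Real.sqrt u) := by ring
      _ = (C * c₀) ^ 2 * u := by rw [Real.mul_self_sqrt hu.le]
  calc (∑ i ∈ F, a i ^ 2 * η (S i)) = T := by rw [hT_def]
    _ = ENNReal.ofReal t := by rw [ht_def, ENNReal.ofReal_toReal hT_fin]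
    _ ≤ ENNReal.ofReal ((C * c₀) ^ 2 * u) := ENNReal.ofReal_le_ofReal hsq
    _ = ENNReal.ofReal ((C * c₀) ^ 2) * ENNReal.ofReal u :=
        ENNReal.ofReal_mul (by positivity)
    _ = ENNReal.ofReal ((C * c₀) ^ 2) * η (⋃ i, S i) := by
        rw [hu_def, ENNReal.ofReal_toReal hUfin]

end
end
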